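/- For 0 ≤ j ≤ t ≤ k ≤ n with t + k ≤ n, the inequality C(n,t)·C(t,j) ≤ C(n,k)·C(k,j) holds for binomial coefficients. -/

import Mathlib

lemma aux_choose_mono (m : ℕ) : ∀ d a, 2 * a + d ≤ m →
    Nat.choose m a ≤ Nat.choose m (a + d) := by
  intro d
  induction d with
  | zero => simp
  | succ d ih =>
    intro a h
    rcases Nat.lt_or_ge (2 * a + d + 1) m with h' | h'
    · have h1 : Nat.choose m a ≤ Nat.choose m (a + 1) :=
        Nat.choose_le_succ_of_lt_half_left (by omega)
      have h2 := ih (a + 1) (by omega)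
      calc Nat.choose m a ≤ Nat.choose m (a + 1) := h1
        _ ≤ Nat.choose m (a + 1 + d) := h2
        _ = Nat.choose m (a + (d + 1)) := by ring_nf
    · have he : a + (d + 1) = m - a := by omega
      rw [he, Nat.choose_symm (by omega)]

theorem stmt_17 (n t k j : ℕ) (hjt : j ≤ t) (htk : t ≤ k) (hkn : k ≤ n)
    (htkn : t + k ≤ n) :
    n.choose t * t.choose j ≤ n.choose k * k.choose j := by
  rw [Nat.choose_mul (n := n) hjt, Nat.choose_mul (n := n) (le_trans hjt htk)]
  apply Nat.mul_le_mul_left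
  have := aux_choose_mono (n - j) (k - t) (t - j) (by omega)
  have he : t - j + (k - t) = k - j := by omega
  rwa [he] at this
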